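/- Let G be a group acting by ring automorphisms on a ring R in which every two-sided ideal A contains a finite product of prime ideals each of which contains A. Then every G-prime ideal I of R is of the form P:G = ⋂_{g∈G} g•P for some prime ideal P of R containing I. -/

import Mathlib

open Pointwise

/-- A two-sided ideal of a (possibly noncommutative) ring, as a subset. -/
structure IsTwoSidedIdealSet (R : Type*) [Ring R] (I : Set R) : Prop where
  zero_mem : (0 : R) ∈ I
  add_mem : ∀ ⦃a b : R⦄, a ∈ I → b ∈ I → a + b ∈ I
  neg_mem : ∀ ⦃a : R⦄, a ∈ I → -a ∈ I
  mul_mem_left : ∀ (r : R) ⦃a : R⦄, a ∈ I → r * a ∈ I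
  mul_mem_right : ∀ (r : R) ⦃a : R⦄, a ∈ I → a * r ∈ I

/-- A prime two-sided ideal: proper, and `A*B ⊆ P` for two-sided ideals `A, B`
implies `A ⊆ P` or `B ⊆ P`.  (Note `A*B ⊆ P` is equivalent to
`∀ a ∈ A, ∀ b ∈ B, a*b ∈ P` since `P` is closed under addition.) -/
def IsPrimeTI (R : Type*) [Ring R] (P : Set R) : Prop :=
  IsTwoSidedIdealSet R P ∧ P ≠ Set.univ ∧
    ∀ A B : Set R, IsTwoSidedIdealSet R A → IsTwoSidedIdealSet R B →
      (∀ a ∈ A, ∀ b ∈ B, a * b ∈ P) → A ⊆ P ∨ B ⊆ P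

/-- A `G`-prime ideal: a proper `G`-stable two-sided ideal `I` such that
`A*B ⊆ I` for `G`-stable two-sided ideals `A, B` implies `A ⊆ I` or `B ⊆ I`. -/
def IsGPrime (G R : Type*) [Group G] [Ring R] [MulSemiringAction G R] (I : Set R) : Prop :=
  IsTwoSidedIdealSet R I ∧ I ≠ Set.univ ∧ (∀ g : G, g • I = I) ∧
    ∀ A B : Set R, IsTwoSidedIdealSet R A → IsTwoSidedIdealSet R B →
      (∀ g : G, g • A = A) → (∀ g : G, g • B = B) →
      (∀ a ∈ A, ∀ b ∈ B, a * b ∈ I) → A ⊆ I ∨ B ⊆ I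

/- ### Auxiliary lemmas -/

private lemma closure_pred {R : Type*} [Ring R] {S : Set R} {p : R → Prop} (h0 : p 0)
    (hadd : ∀ a b, p a → p b → p (a+b)) (hneg : ∀ a, p a → p (-a))
    (hmem : ∀ x ∈ S, p x) : ∀ x ∈ (AddSubgroup.closure S : Set R), p x := fun _ hx =>
  AddSubgroup.closure_induction hmem h0 (fun a b _ _ => hadd a b) (fun a _ => hneg a) hx

private lemma smul_TSI {G R : Type*} [Group G] [Ring R] [MulSemiringAction G R]
    (g : G) {P : Set R} (hP : IsTwoSidedIdealSet R P) : IsTwoSidedIdealSet R (g • P) := by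
  constructor
  · rw [Set.mem_smul_set_iff_inv_smul_mem]; simpa using hP.zero_mem
  · intro a b ha hb
    rw [Set.mem_smul_set_iff_inv_smul_mem] at ha hb ⊢
    rw [smul_add]; exact hP.add_mem ha hb
  · intro a ha
    rw [Set.mem_smul_set_iff_inv_smul_mem] at ha ⊢
    rw [smul_neg]; exact hP.neg_mem ha
  · intro r a ha
    rw [Set.mem_smul_set_iff_inv_smul_mem] at ha ⊢
    rw [smul_mul']; exact hP.mul_mem_left _ ha
  · intro r a ha
    rw [Set.mem_smul_set_iff_inv_smul_mem] at ha ⊢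
    rw [smul_mul']; exact hP.mul_mem_right _ ha

private lemma iInter_TSI {R : Type*} [Ring R] {ι : Sort*} {P : ι → Set R}
    (hP : ∀ i, IsTwoSidedIdealSet R (P i)) : IsTwoSidedIdealSet R (⋂ i, P i) := by
  constructor
  · exact Set.mem_iInter.2 fun i => (hP i).zero_mem
  · intro a b ha hb
    exact Set.mem_iInter.2 fun i =>
      (hP i).add_mem (Set.mem_iInter.1 ha i) (Set.mem_iInter.1 hb i)
  · intro a ha
    exact Set.mem_iInter.2 fun i => (hP i).neg_mem (Set.mem_iInter.1 ha i)
  · intro r a ha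
    exact Set.mem_iInter.2 fun i => (hP i).mul_mem_left r (Set.mem_iInter.1 ha i)
  · intro r a ha
    exact Set.mem_iInter.2 fun i => (hP i).mul_mem_right r (Set.mem_iInter.1 ha i)

private lemma smul_list_prod {G R : Type*} [Group G] [Ring R] [MulSemiringAction G R]
    (g : G) (l : List R) : g • l.prod = (l.map (g • ·)).prod := by
  induction l with
  | nil => simp
  | cons a t iht => simp [smul_mul', iht]

/-- The key induction: if a product of finitely many `G`-stable ideals lies in the
`G`-prime ideal `I`, then one of them does. -/
private lemma key {G R : Type*} [Group G] [Ring R] [MulSemiringAction G R]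
    (I : Set R) (hI : IsGPrime G R I) :
    ∀ n (Qs : Fin (n+1) → Set R), (∀ i, IsTwoSidedIdealSet R (Qs i)) →
    (∀ i (g : G), g • Qs i = Qs i) →
    (∀ f : Fin (n+1) → R, (∀ i, f i ∈ Qs i) → (List.ofFn f).prod ∈ I) →
    ∃ i, Qs i ⊆ I := by
  intro n
  induction n with
  | zero =>
    intro Qs hQ hG hprod
    refine ⟨0, fun a ha => ?_⟩
    have := hprod (fun _ => a) (fun i => Fin.cases ha (fun j => j.elim0) i)
    simpa using this
  | succ m ih =>
    intro Qs hQ hG hprod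
    set S : Set R :=
      {x | ∃ f : Fin (m+1) → R, (∀ i, f i ∈ Qs i.succ) ∧ x = (List.ofFn f).prod} with hS
    set B : Set R := (AddSubgroup.closure S : Set R) with hB
    have hSB : S ⊆ B := AddSubgroup.subset_closure
    -- generators are stable under left/right multiplication and the G-action
    have hmulL : ∀ r : R, ∀ x ∈ S, r * x ∈ S := by
      rintro r x ⟨f, hf, rfl⟩
      refine ⟨Fin.cons (r * f 0) (Fin.tail f), fun i => ?_, ?_⟩
      · refine Fin.cases ?_ (fun j => ?_) i
        · simpa using (hQ _).mul_mem_left r (hf 0)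
        · simpa [Fin.tail] using hf j.succ
      · rw [List.ofFn_succ, List.ofFn_succ, List.prod_cons, List.prod_cons, ← mul_assoc]
        simp [Fin.tail]
    have hmulR : ∀ r : R, ∀ x ∈ S, x * r ∈ S := by
      rintro r x ⟨f, hf, rfl⟩
      refine ⟨Fin.snoc (Fin.init f) (f (Fin.last m) * r), fun i => ?_, ?_⟩
      · refine Fin.lastCases ?_ (fun j => ?_) i
        · simpa using (hQ _).mul_mem_right r (hf (Fin.last m))
        · simpa [Fin.init] using hf j.castSucc
      · rw [List.ofFn_succ', List.ofFn_succ', List.prod_concat, List.prod_concat, mul_assoc]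
        simp [Fin.init]
    have hsmulS : ∀ (g : G), ∀ x ∈ S, g • x ∈ S := by
      rintro g x ⟨f, hf, rfl⟩
      refine ⟨fun i => g • f i, fun i => ?_, ?_⟩
      · rw [← hG i.succ g]; exact Set.smul_mem_smul_set (hf i)
      · rw [smul_list_prod, List.map_ofFn]; rfl
    -- B is a two-sided ideal
    have hBideal : IsTwoSidedIdealSet R B := by
      constructor
      · exact (AddSubgroup.closure S).zero_mem
      · intro a b ha hb; exact (AddSubgroup.closure S).add_mem ha hb
      · intro a ha; exact (AddSubgroup.closure S).neg_mem ha
      · intro r a ha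
        refine closure_pred (p := fun x => r * x ∈ B) ?_ ?_ ?_ ?_ a ha
        · simp only [mul_zero]; exact (AddSubgroup.closure S).zero_mem
        · intro a b ha hb; rw [mul_add]; exact (AddSubgroup.closure S).add_mem ha hb
        · intro a ha; rw [mul_neg]; exact (AddSubgroup.closure S).neg_mem ha
        · intro x hx; exact hSB (hmulL r x hx)
      · intro r a ha
        refine closure_pred (p := fun x => x * r ∈ B) ?_ ?_ ?_ ?_ a ha
        · simp only [zero_mul]; exact (AddSubgroup.closure S).zero_mem
        · intro a b ha hb; rw [add_mul]; exact (AddSubgroup.closure S).add_mem ha hb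
        · intro a ha; rw [neg_mul]; exact (AddSubgroup.closure S).neg_mem ha
        · intro x hx; exact hSB (hmulR r x hx)
    -- B is G-stable
    have hBsub : ∀ g : G, g • B ⊆ B := by
      intro g x hx
      rw [Set.mem_smul_set_iff_inv_smul_mem] at hx
      have : g • (g⁻¹ • x) ∈ B := by
        refine closure_pred (p := fun y => g • y ∈ B) ?_ ?_ ?_ ?_ _ hx
        · simp only [smul_zero]; exact (AddSubgroup.closure S).zero_mem
        · intro a b ha hb; rw [smul_add]; exact (AddSubgroup.closure S).add_mem ha hb
        · intro a ha; rw [smul_neg]; exact (AddSubgroup.closure S).neg_mem ha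
        · intro y hy; exact hSB (hsmulS g y hy)
      simpa using this
    have hBstable : ∀ g : G, g • B = B := by
      intro g
      refine le_antisymm (hBsub g) ?_
      intro x hx
      rw [Set.mem_smul_set_iff_inv_smul_mem]
      exact hBsub g⁻¹ (Set.smul_mem_smul_set hx)
    -- products of Qs 0 with B land in I
    have hab : ∀ a ∈ Qs 0, ∀ b ∈ B, a * b ∈ I := by
      intro a ha b hb
      refine closure_pred (p := fun y => a * y ∈ I) ?_ ?_ ?_ ?_ b hb
      · simpa using hI.1.zero_mem
      · intro x y hx hy; rw [mul_add]; exact hI.1.add_mem hx hy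
      · intro x hx; rw [mul_neg]; exact hI.1.neg_mem hx
      · rintro x ⟨f, hf, rfl⟩
        have := hprod (Fin.cons a f) (fun i => by
          refine Fin.cases ?_ (fun j => ?_) i
          · simpa using ha
          · simpa using hf j)
        rw [List.ofFn_succ, List.prod_cons] at this
        simpa using this
    rcases hI.2.2.2 (Qs 0) B (hQ 0) hBideal (hG 0) hBstable hab with h | h
    · exact ⟨0, h⟩
    · obtain ⟨i, hi⟩ := ih (fun i => Qs i.succ) (fun i => hQ i.succ) (fun i => hG i.succ)
        (fun f hf => h (hSB ⟨f, hf, rfl⟩))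
      exact ⟨i.succ, hi⟩

/-- if every two-sided ideal `A` of `R` contains a finite product of
prime ideals each containing `A`, then every `G`-prime ideal of `R` has the form
`P:G = ⋂_{g ∈ G} g•P` for some prime ideal `P ⊇ I`. -/
theorem gPrime_eq_iInter_smul_prime {G R : Type*} [Group G] [Ring R]
    [MulSemiringAction G R]
    (hNoeth : ∀ A : Set R, IsTwoSidedIdealSet R A →
      ∃ (n : ℕ) (Ps : Fin n → Set R), (∀ i, IsPrimeTI R (Ps i)) ∧ (∀ i, A ⊆ Ps i) ∧
        ∀ f : Fin n → R, (∀ i, f i ∈ Ps i) → (List.ofFn f).prod ∈ A)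
    (I : Set R) (hI : IsGPrime G R I) :
    ∃ P : Set R, IsPrimeTI R P ∧ I ⊆ P ∧ I = ⋂ g : G, g • P := by
  obtain ⟨n, Ps, hprime, hsub, hprod⟩ := hNoeth I hI.1
  cases n with
  | zero =>
    exfalso
    have h1 : (1 : R) ∈ I := by simpa using hprod Fin.elim0 (fun i => i.elim0)
    exact hI.2.1 (Set.eq_univ_of_forall fun r => by simpa using hI.1.mul_mem_left r h1)
  | succ m =>
    set Qs : Fin (m+1) → Set R := fun i => ⋂ g : G, g • Ps i with hQs
    have hQsub : ∀ i, Qs i ⊆ Ps i := by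
      intro i x hx
      have := Set.mem_iInter.1 hx 1
      rwa [one_smul] at this
    have hIQ : ∀ i, I ⊆ Qs i := by
      intro i x hx
      refine Set.mem_iInter.2 fun g => ?_
      rw [Set.mem_smul_set_iff_inv_smul_mem]
      apply hsub i
      rw [← hI.2.2.1 g] at hx
      exact Set.mem_smul_set_iff_inv_smul_mem.1 hx
    have hQTSI : ∀ i, IsTwoSidedIdealSet R (Qs i) :=
      fun i => iInter_TSI (fun g => smul_TSI g (hprime i).1)
    have hQstable : ∀ i (g : G), g • Qs i = Qs i := by
      intro i g
      ext x
      rw [Set.mem_smul_set_iff_inv_smul_mem]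
      simp only [hQs, Set.mem_iInter]
      constructor
      · intro h h'
        have := h (g⁻¹ * h')
        rw [Set.mem_smul_set_iff_inv_smul_mem, mul_inv_rev, inv_inv, mul_smul,
          smul_inv_smul] at this
        rwa [Set.mem_smul_set_iff_inv_smul_mem]
      · intro h h'
        rw [Set.mem_smul_set_iff_inv_smul_mem]
        have := h (g * h')
        rwa [Set.mem_smul_set_iff_inv_smul_mem, mul_inv_rev, mul_smul] at this
    obtain ⟨i, hiI⟩ := key I hI m Qs hQTSI hQstable
      (fun f hf => hprod f (fun j => hQsub j (hf j)))
    exact ⟨Ps i, hprime i, hsub i, Set.Subset.antisymm (hIQ i) hiI⟩
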